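/- A left Ã-module E is small if and only if: (1) there exists N with a^N·Â(E) = 0; (2) B(E) ⊆ Â(E); (3) ⋂_{m≥0} bᵐ·E ⊆ Â(E); (4) Ker(b) and Coker(b) are finite-dimensional complex vector spaces. Moreover, in that case Â(E) = B(E) and this space is finite-dimensional. -/

import Mathlib

set_option synthInstance.maxHeartbeats 1000000
set_option maxHeartbeats 1000000

open PowerSeries

noncomputable section

/-- `ℂ[[b]]`. -/
abbrev Rb := PowerSeries ℂ

variable {E : Type} [AddCommGroup E] [Module Rb E]
  [Module ℂ E] [IsScalarTower ℂ Rb E]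

/-- Multiplication by `bⁿ`, i.e. the submodule `bⁿ·G` of a `ℂ[[b]]`-module. -/
def bpow (n : ℕ) (G : Submodule Rb E) : Submodule Rb E :=
  (Ideal.span {(X : Rb) ^ n}) • G

/-- The operator `b` (multiplication by `X`) as a `ℂ`-linear endomorphism. -/
def bop : E →ₗ[ℂ] E := (LinearMap.lsmul Rb E (X : Rb)).restrictScalars ℂ

/-- An (a,b)-module structure: `E` is a free finite-rank `ℂ[[b]]`-module
and `a` is a `ℂ`-linear, `b`-adically continuous endomorphism with
`a·b − b·a = b²`; equivalently, `a(S·x) = S·a(x) + b²·S'(b)·x` for all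
`S ∈ ℂ[[b]]`. -/
def IsABMod (a : E →ₗ[ℂ] E) : Prop :=
  ∀ (S : Rb) (x : E), a (S • x) = S • a x + ((X : Rb) ^ 2 * derivative ℂ S) • x

/-- The operators `Tⱼ = bʲ·(b⁻¹a)ʲ`, defined recursively by `T₀ = id`,
`T_{j+1} = (a − j·b)∘Tⱼ`. -/
def Tj (a : E →ₗ[ℂ] E) : ℕ → (E →ₗ[ℂ] E)
  | 0 => LinearMap.id
  | (j + 1) => (a - (j : ℂ) • bop) ∘ₗ Tj a j

/-- The `ℂ`-subspace `Σ_{j=0}^{k} aʲ·b^{k−j+1}·E`. -/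
def Psi (a : E →ₗ[ℂ] E) (k : ℕ) : Submodule ℂ E :=
  ⨆ j ∈ Finset.range (k + 1),
    Submodule.map (a ^ j) ((bpow (k - j + 1) ⊤).restrictScalars ℂ)

/-- The regularity condition `a^{k+1}·E ⊆ Σ_{j=0}^{k} aʲ·b^{k−j+1}·E`. -/
def RegCond (a : E →ₗ[ℂ] E) (k : ℕ) : Prop :=
  ∀ x : E, (a ^ (k + 1)) x ∈ Psi a k

/-- `E` is regular (equivalently: some regularity condition holds). -/
def IsRegularAB (a : E →ₗ[ℂ] E) : Prop := ∃ k, RegCond a k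

/-- The regularity order `or(E)`. -/
def regOrder (a : E →ₗ[ℂ] E) : ℕ := sInf {k | RegCond a k}

/-- `b^k·E^♯ = b^k·Φ_k(E) = Σ_{j=0}^{k} b^{k−j}·Tⱼ(E)`: the saturation
`E^♯ = Σ_j (b⁻¹a)ʲ·E` of `E`, renormalized by `b^k` so as to live inside `E`. -/
def Wsat (a : E →ₗ[ℂ] E) (k : ℕ) : Submodule Rb E :=
  Submodule.span Rb
    (⋃ j ∈ Finset.range (k + 1), Set.range fun x : E => ((X : Rb) ^ (k - j)) • (Tj a j x))

/-- A submodule `G ⊆ E` is a simple-pole submodule when `a·G ⊆ b·G`. -/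
def SimplePoleSub (a : E →ₗ[ℂ] E) (G : Submodule Rb E) : Prop :=
  ∀ x ∈ G, a x ∈ bpow 1 G

/-- The index `δ(E)`: the smallest `m` with `E^♯ ⊆ b^{−m}·E`,
i.e. `bᵐ·E^♯ ⊆ E`, i.e. `bᵐ·(b^k·E^♯) ⊆ b^k·E` for `k = or(E)`. -/
def deltaIdx (a : E →ₗ[ℂ] E) : ℕ :=
  sInf {m | bpow m (Wsat a (regOrder a)) ≤ bpow (regOrder a) ⊤}

/-- The biggest simple-pole submodule `E^b` of `E`. -/
def Eb (a : E →ₗ[ℂ] E) : Submodule Rb E := sSup {G | SimplePoleSub a G}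

/-- The `b`-torsion `B(E)` of a left `Ã`-module. -/

def Btor (E : Type) [AddCommGroup E] [Module Rb E] : Set E :=
  {x : E | ∃ N : ℕ, ((X : Rb) ^ N) • x = 0}

/-- The `a`-torsion `A(E)` of a left `Ã`-module. -/
def Ator (a : E →ₗ[ℂ] E) : Set E := {x : E | ∃ N : ℕ, (a ^ N) x = 0}

/-- `Â(E) = {x ∈ E | ℂ[[b]]·x ⊆ A(E)}`. -/
def Ahat (a : E →ₗ[ℂ] E) : Set E := {x : E | ∀ S : Rb, S • x ∈ Ator a}

section Helpers
open Finset
set_option linter.unusedSectionVars false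

lemma C_smul' (c : ℂ) (x : E) : (C c : Rb) • x = c • x := by
  rw [PowerSeries.C_eq_algebraMap, algebraMap_smul]

lemma smul_comm'' (c : ℂ) (S : Rb) (x : E) : S • (c • x) = c • (S • x) := by
  rw [← C_smul' c x, smul_smul, mul_comm, ← smul_smul, C_smul']

lemma bop_apply (x : E) : (bop : E →ₗ[ℂ] E) x = (X : Rb) • x := rfl

lemma X_sq_mul_deriv (m : ℕ) : (X : Rb) ^ 2 * derivative ℂ ((X : Rb) ^ m) = (m : ℂ) • (X : Rb) ^ (m + 1) := by
  rw [Derivation.leibniz_pow, PowerSeries.smul_eq_C_mul, map_natCast]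
  cases m with
  | zero => simp
  | succ m =>
    simp only [derivative_X, smul_eq_mul, mul_one, Nat.add_sub_cancel, nsmul_eq_mul]
    push_cast
    ring

lemma a_X_pow_smul (a : E →ₗ[ℂ] E) (ha : IsABMod a) (m : ℕ) (y : E) :
    a (((X : Rb) ^ m) • y) = ((X : Rb) ^ m) • ((a + (m : ℂ) • (bop : E →ₗ[ℂ] E)) y) := by
  rw [ha, X_sq_mul_deriv]
  simp only [LinearMap.add_apply, LinearMap.smul_apply, bop_apply, smul_add]
  congr 1
  rw [smul_comm'' (m:ℂ), smul_smul, mul_comm ((X:Rb)^m) X, ← pow_succ', smul_assoc]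

lemma a_pow_X_pow_smul (a : E →ₗ[ℂ] E) (ha : IsABMod a) (k m : ℕ) (y : E) :
    (a ^ k) (((X : Rb) ^ m) • y) = ((X : Rb) ^ m) • (((a + (m : ℂ) • (bop : E →ₗ[ℂ] E)) ^ k) y) := by
  induction k generalizing y with
  | zero => simp
  | succ k ih =>
    rw [pow_succ', pow_succ']
    simp only [Module.End.mul_apply]
    rw [ih, a_X_pow_smul a ha]

lemma expand_pow (a b' : E →ₗ[ℂ] E) (k : ℕ) (x : E) :
    ∃ w : ℕ → E, (∀ j, k < j → w j = 0) ∧ w k = (b' ^ k) x ∧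
      ∀ m : ℕ, ((a + (m : ℂ) • b') ^ k) x = ∑ j ∈ Finset.range (k + 1), ((m : ℂ) ^ j) • w j := by
  induction k with
  | zero =>
    refine ⟨fun j => if j = 0 then x else 0, ?_, by simp, by simp⟩
    intro j hj
    simp [Nat.pos_iff_ne_zero.mp hj]
  | succ k ih =>
    obtain ⟨w, hw0, hwk, hsum⟩ := ih
    refine ⟨fun j => a (w j) + (if j = 0 then 0 else b' (w (j - 1))), ?_, ?_, ?_⟩
    · intro j hj
      dsimp only
      have h1 : k < j := Nat.lt_of_succ_lt hj
      have h2 : j ≠ 0 := by omega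
      rw [hw0 j h1, if_neg h2, hw0 (j-1) (by omega), map_zero, map_zero, add_zero]
    · dsimp only
      rw [if_neg (Nat.succ_ne_zero k), hw0 (k+1) (Nat.lt_succ_self k), map_zero, zero_add,
        Nat.add_sub_cancel, hwk, ← Module.End.mul_apply, ← pow_succ']
    · intro m
      dsimp only
      rw [pow_succ', Module.End.mul_apply]
      calc (a + (m:ℂ) • b') (((a + (m:ℂ) • b') ^ k) x)
          = ∑ j ∈ range (k+1), ((m:ℂ)^j • a (w j) + (m:ℂ)^(j+1) • b' (w j)) := by
            rw [hsum m, map_sum]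
            refine sum_congr rfl fun j _ => ?_
            simp only [LinearMap.add_apply, LinearMap.smul_apply, map_smul]
            rw [smul_add, smul_smul, ← pow_succ]
        _ = (∑ j ∈ range (k+1), (m:ℂ)^j • a (w j))
            + ∑ j ∈ range (k+1), (m:ℂ)^(j+1) • b' (w j) := sum_add_distrib
        _ = (∑ j ∈ range (k+2), (m:ℂ)^j • a (w j))
            + ∑ j ∈ range (k+2), (m:ℂ)^j • (if j = 0 then (0:E) else b' (w (j-1))) := by
            rw [sum_range_succ (fun j => (m:ℂ)^j • a (w j)) (k+1),
              hw0 (k+1) (Nat.lt_succ_self k), map_zero, smul_zero, add_zero,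
              sum_range_succ' (fun j => (m:ℂ)^j • (if j = 0 then (0:E) else b' (w (j-1)))) (k+1)]
            simp only [Nat.add_sub_cancel, if_neg (Nat.succ_ne_zero _), if_pos rfl, pow_zero,
              smul_zero, add_zero, if_true, one_smul, eq_self_iff_true]
        _ = ∑ j ∈ range (k+2), (m:ℂ)^j • (a (w j) + (if j = 0 then (0:E) else b' (w (j-1)))) := by
            rw [← sum_add_distrib]
            exact sum_congr rfl fun j _ => (smul_add _ _ _).symm


lemma vandermonde_top (n : ℕ) (v : ℕ → E)
    (hv : ∀ m : ℕ, m ≤ n → ∑ j ∈ Finset.range (n + 1), ((m : ℂ) ^ j) • v j = 0) :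
    v n = 0 := by
  rw [← Module.forall_dual_apply_eq_zero_iff ℂ]
  intro φ
  set p : Polynomial ℂ := ∑ j ∈ Finset.range (n + 1), Polynomial.C (φ (v j)) * Polynomial.X ^ j with hp
  have hdeg : p.natDegree ≤ n := by
    refine (Polynomial.natDegree_sum_le _ _).trans ?_
    rw [Finset.fold_max_le]
    refine ⟨Nat.zero_le _, fun j hj => ?_⟩
    exact (Polynomial.natDegree_C_mul_X_pow_le _ _).trans (Nat.lt_succ_iff.mp (Finset.mem_range.mp hj))
  have heval : ∀ i : Fin (n + 1), p.eval ((i : ℕ) : ℂ) = 0 := by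
    intro i
    have h := congrArg φ (hv i (Nat.lt_succ_iff.mp i.isLt))
    simp only [map_sum, map_smul, map_zero, smul_eq_mul] at h
    rw [hp]
    simp only [Polynomial.eval_finset_sum, Polynomial.eval_mul, Polynomial.eval_C,
      Polynomial.eval_pow, Polynomial.eval_X]
    rw [← h]
    exact Finset.sum_congr rfl fun j _ => mul_comm _ _
  have hinj : Function.Injective (fun i : Fin (n + 1) => ((i : ℕ) : ℂ)) := by
    intro i j h
    exact Fin.ext (Nat.cast_injective h)
  have hp0 : p = 0 :=
    Polynomial.eq_zero_of_natDegree_lt_card_of_eval_eq_zero p hinj heval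
      (by simpa using Nat.lt_succ_of_le hdeg)
  have hc := congrArg (fun q : Polynomial ℂ => q.coeff n) hp0
  simp only [hp, Polynomial.finset_sum_coeff, Polynomial.coeff_C_mul, Polynomial.coeff_X_pow,
    Polynomial.coeff_zero] at hc
  rwa [Finset.sum_eq_single n (fun j _ hne => by simp [Ne.symm hne]) (by simp), if_pos rfl, mul_one] at hc

lemma bop_pow_apply (k : ℕ) (x : E) : ((bop : E →ₗ[ℂ] E) ^ k) x = ((X : Rb) ^ k) • x := by
  induction k with
  | zero => simp
  | succ k ih => rw [pow_succ', Module.End.mul_apply, ih, bop_apply, smul_smul, ← pow_succ']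


lemma mk_decomp (f : ℕ → ℂ) (M : ℕ) :
    PowerSeries.mk f = (∑ k ∈ Finset.range M, (C (f k)) * (X:Rb)^k)
      + (X:Rb)^M * PowerSeries.mk (fun k => f (k + M)) := by
  ext j
  rw [map_add, map_sum, coeff_mk, mul_comm ((X:Rb)^M), PowerSeries.coeff_mul_X_pow']
  simp only [PowerSeries.coeff_C_mul, PowerSeries.coeff_X_pow, mul_ite, mul_one, mul_zero,
    coeff_mk]
  rw [Finset.sum_ite_eq (Finset.range M) j f]
  by_cases h : j < M
  · simp [Finset.mem_range.mpr h, Nat.not_le.mpr h]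
  · have h' : M ≤ j := Nat.le_of_not_lt h
    simp [h, Nat.sub_add_cancel h', h', fun hh => h (Finset.mem_range.mp hh)]


lemma S_decomp (S : Rb) (M : ℕ) :
    S = (∑ k ∈ Finset.range M, (C (coeff k S)) * (X:Rb)^k)
      + (X:Rb)^M * PowerSeries.mk (fun k => coeff (k + M) S) := by
  have h : PowerSeries.mk (fun n => coeff n S) = S := by
    ext j; simp [coeff_mk]
  conv_lhs => rw [← h]
  exact mk_decomp _ M


lemma ahat_smul_mem {a : E →ₗ[ℂ] E} {x : E} (hx : x ∈ Ahat a) (S : Rb) : S • x ∈ Ahat a := by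
  intro T
  rw [smul_smul]
  exact hx (T * S)

lemma ahat_kill {a : E →ₗ[ℂ] E} (ha : IsABMod a) {N : ℕ}
    (hN : ∀ x ∈ Ahat a, (a ^ N) x = 0) {x : E} (hx : x ∈ Ahat a) :
    ((X : Rb) ^ (3 * N)) • x = 0 := by
  obtain ⟨w, hw0, hwN, hsum⟩ := expand_pow a bop N x
  have key : ∀ m : ℕ, m ≤ N → ∑ j ∈ Finset.range (N+1), ((m:ℂ)^j) • (((X:Rb)^(2*N)) • w j) = 0 := by
    intro m hm
    have h1 : ((X:Rb)^m) • (((a + (m:ℂ) • (bop : E →ₗ[ℂ] E))^N) x) = 0 := by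
      rw [← a_pow_X_pow_smul a ha]
      exact hN _ (ahat_smul_mem hx _)
    have h2 : ((X:Rb)^(2*N)) • (((a + (m:ℂ) • (bop : E →ₗ[ℂ] E))^N) x) = 0 := by
      have he : 2*N = (2*N - m) + m := by omega
      rw [he, pow_add, ← smul_smul, h1, smul_zero]
    calc ∑ j ∈ Finset.range (N+1), ((m:ℂ)^j) • (((X:Rb)^(2*N)) • w j)
        = ((X:Rb)^(2*N)) • ∑ j ∈ Finset.range (N+1), ((m:ℂ)^j) • w j := by
          rw [Finset.smul_sum]
          exact Finset.sum_congr rfl fun j _ => (smul_comm'' _ _ _).symm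
      _ = 0 := by rw [← hsum m, h2]
  have hvN := vandermonde_top N _ key
  rw [hwN, bop_pow_apply, smul_smul, ← pow_add] at hvN
  have h3 : 3*N = 2*N + N := by ring
  rw [h3]
  exact hvN


lemma finite_of_sep (hcoker : FiniteDimensional ℂ (E ⧸ LinearMap.range (bop : E →ₗ[ℂ] E)))
    (hsep : ∀ z : E, (∀ m : ℕ, ∃ y : E, z = ((X:Rb)^m) • y) → z = 0) :
    Module.Finite Rb E := by
  classical
  obtain ⟨n, s, hs⟩ := Module.Finite.exists_fin (R := ℂ) (M := E ⧸ LinearMap.range (bop : E →ₗ[ℂ] E))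
  set π := (LinearMap.range (bop : E →ₗ[ℂ] E)).mkQ with hπ
  have hsurj : Function.Surjective π := Submodule.mkQ_surjective _
  choose g hg using fun i => hsurj (s i)
  have step : ∀ x : E, ∃ (c : Fin n → ℂ) (y : E), x = (∑ i, c i • g i) + (X:Rb) • y := by
    intro x
    have hx : π x ∈ Submodule.span ℂ (Set.range s) := hs ▸ Submodule.mem_top
    obtain ⟨c, hc⟩ := (Submodule.mem_span_range_iff_exists_fun ℂ).mp hx
    have : π (x - ∑ i, c i • g i) = 0 := by
      rw [map_sub, map_sum]
      simp only [map_smul, hg]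
      rw [hc, sub_self]
    rw [Submodule.mkQ_apply, Submodule.Quotient.mk_eq_zero] at this
    obtain ⟨y, hy⟩ := this
    exact ⟨c, y, by rw [← bop_apply, hy]; abel⟩
  choose cf tf htf using step
  have main : ∀ x : E, x ∈ Submodule.span Rb (Set.range g) := by
    intro x
    set y : ℕ → E := fun k => tf^[k] x with hydef
    have hy0 : y 0 = x := rfl
    have hysucc : ∀ k, y (k+1) = tf (y k) := fun k => Function.iterate_succ_apply' tf k x
    set v : ℕ → E := fun k => ∑ i, cf (y k) i • g i with hv
    have hrec : ∀ k, y k = v k + (X:Rb) • y (k+1) := by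
      intro k; rw [hysucc k]; exact htf (y k)
    have hM : ∀ M : ℕ, x = (∑ k ∈ Finset.range M, ((X:Rb)^k) • v k) + ((X:Rb)^M) • y M := by
      intro M
      induction M with
      | zero => simp [hy0]
      | succ M ih =>
        rw [ih, Finset.sum_range_succ, hrec M, smul_add, smul_smul, ← pow_succ]
        abel
    set S : Fin n → Rb := fun i => PowerSeries.mk (fun k => cf (y k) i) with hS
    have hz : ∀ M : ℕ, ∃ y' : E, x - (∑ i, S i • g i) = ((X:Rb)^M) • y' := by
      intro M
      refine ⟨y M - ∑ i, (PowerSeries.mk (fun k => cf (y (k+M)) i)) • g i, ?_⟩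
      have hSdec : ∀ i, S i • g i = (∑ k ∈ Finset.range M, cf (y k) i • (((X:Rb)^k) • g i))
          + ((X:Rb)^M) • ((PowerSeries.mk (fun k => cf (y (k+M)) i)) • g i) := by
        intro i
        rw [hS]; dsimp only
        rw [mk_decomp (fun k => cf (y k) i) M, add_smul, Finset.sum_smul]
        congr 1
        · exact Finset.sum_congr rfl fun k _ => by rw [mul_smul, C_smul']
        · rw [mul_smul]
      rw [Finset.sum_congr rfl (fun i _ => hSdec i), Finset.sum_add_distrib, ← Finset.smul_sum,
        Finset.sum_comm]
      have hvk : ∀ k ∈ Finset.range M, (∑ i, cf (y k) i • (((X:Rb)^k) • g i)) = ((X:Rb)^k) • v k := by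
        intro k _
        rw [hv]; dsimp only
        rw [Finset.smul_sum]
        exact Finset.sum_congr rfl fun i _ => (smul_comm'' _ _ _).symm
      rw [Finset.sum_congr rfl hvk, hM M, smul_sub]
      abel
    have hzero : x - (∑ i, S i • g i) = 0 := hsep _ (fun m => hz m)
    have hxeq : x = ∑ i, S i • g i := by rwa [sub_eq_zero] at hzero
    rw [hxeq]
    exact Submodule.sum_mem _ fun i _ => Submodule.smul_mem _ _ (Submodule.subset_span ⟨i, rfl⟩)
  exact ⟨Submodule.fg_def.mpr ⟨Set.range g, Set.finite_range g, eq_top_iff.mpr fun x _ => main x⟩⟩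

lemma key_tor [Module.Finite Rb E] (M : ℕ) :
    ∃ F : Submodule ℂ E, FiniteDimensional ℂ ↥F ∧
      ∀ x : E, ((X : Rb) ^ M) • x = 0 → x ∈ F := by
  classical
  set K : Submodule Rb E := Submodule.torsionBy Rb E ((X : Rb) ^ M) with hK
  obtain ⟨T, hT⟩ := IsNoetherian.noetherian K
  set gen : Set E := Set.image2 (fun (k : ℕ) (t : E) => ((X : Rb) ^ k) • t) (Set.Iio M) (↑T) with hgen
  have hfin : gen.Finite := Set.Finite.image2 _ (Set.finite_Iio M) T.finite_toSet
  refine ⟨Submodule.span ℂ gen, FiniteDimensional.span_of_finite ℂ hfin, ?_⟩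
  intro x hx
  have hxK : x ∈ K := hx
  rw [← hT] at hxK
  obtain ⟨f, -, hf⟩ := Submodule.mem_span_finset.mp hxK
  rw [← hf]
  refine Submodule.sum_mem _ fun t ht => ?_
  have htK : t ∈ K := hT ▸ Submodule.subset_span ht
  have htor : ((X : Rb) ^ M) • t = 0 := htK
  have : f t • t = ∑ k ∈ Finset.range M, (coeff k (f t)) • (((X : Rb) ^ k) • t) := by
    conv_lhs => rw [S_decomp (f t) M]
    rw [add_smul, Finset.sum_smul, mul_comm ((X:Rb)^M), mul_smul, htor, smul_zero, add_zero]
    exact Finset.sum_congr rfl fun k _ => by rw [mul_smul, C_smul']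
  rw [this]
  refine Submodule.sum_mem _ fun k hk => Submodule.smul_mem _ _ (Submodule.subset_span ?_)
  exact ⟨k, Finset.mem_range.mp hk, t, ht, rfl⟩

lemma coker_findim [Module.Finite Rb E] :
    FiniteDimensional ℂ (E ⧸ LinearMap.range (bop : E →ₗ[ℂ] E)) := by
  classical
  obtain ⟨n, s, hs⟩ := Module.Finite.exists_fin (R := Rb) (M := E)
  set π := (LinearMap.range (bop : E →ₗ[ℂ] E)).mkQ with hπ
  have hπX : ∀ z : E, π ((X : Rb) • z) = 0 := by
    intro z
    rw [← bop_apply, Submodule.mkQ_apply, Submodule.Quotient.mk_eq_zero]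
    exact ⟨z, rfl⟩
  have main : ∀ x : E, π x ∈ Submodule.span ℂ (Set.range fun i => π (s i)) := by
    intro x
    have hx : x ∈ Submodule.span Rb (Set.range s) := hs ▸ Submodule.mem_top
    induction hx using Submodule.span_induction with
    | mem z hz => obtain ⟨i, rfl⟩ := hz; exact Submodule.subset_span ⟨i, rfl⟩
    | zero => simp
    | add y z _ _ hy hz => rw [map_add]; exact Submodule.add_mem _ hy hz
    | smul S z hzmem hz =>
      have : S • z = (constantCoeff S) • z
          + (X : Rb) • ((PowerSeries.mk fun k => coeff (k + 1) S) • z) := by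
        conv_lhs => rw [S_decomp S 1]
        rw [add_smul, pow_one, mul_smul]
        congr 1
        simp [C_smul']
      rw [this, map_add, map_smul, hπX, add_zero]
      exact Submodule.smul_mem _ _ hz
  have : Submodule.span ℂ (Set.range fun i => π (s i)) = ⊤ := by
    rw [eq_top_iff]
    intro q _
    obtain ⟨x, rfl⟩ := Submodule.mkQ_surjective _ q
    exact main x
  exact ⟨Submodule.fg_def.mpr ⟨_, Set.finite_range _, this⟩⟩

lemma krull_sep [Module.Finite Rb E] (x : E) (hx : ∀ m : ℕ, ∃ y : E, x = ((X : Rb) ^ m) • y) :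
    x = 0 := by
  have hXne : Ideal.span {(X : Rb)} ≠ ⊤ := by
    rw [Ne, Ideal.span_singleton_eq_top]
    intro h
    have := h.map (constantCoeff (R := ℂ))
    simp at this
  have hbot := (Ideal.span {(X : Rb)}).iInf_pow_smul_eq_bot_of_isLocalRing (M := E) hXne
  have : x ∈ (⨅ i : ℕ, Ideal.span {(X : Rb)} ^ i • (⊤ : Submodule Rb E)) := by
    rw [Submodule.mem_iInf]
    intro i
    obtain ⟨y, rfl⟩ := hx i
    rw [Ideal.span_singleton_pow]
    exact Submodule.smul_mem_smul (Ideal.mem_span_singleton_self _) Submodule.mem_top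
  rw [hbot] at this
  exact this

end Helpers

/-- `E` is small: `E` is a finite-type `ℂ[[b]]`-module, `B(E) ⊆ Â(E)`, and
`a^N·Â(E) = 0` for some `N`. -/
def IsSmall (a : E →ₗ[ℂ] E) : Prop :=
  Module.Finite Rb E ∧ Btor E ⊆ Ahat a ∧ ∃ N : ℕ, ∀ x ∈ Ahat a, (a ^ N) x = 0

/-- A left `Ã`-module `E` is small if and only if: (1) `a^N·Â(E) = 0` for some
`N`; (2) `B(E) ⊆ Â(E)`; (3) `⋂ₘ bᵐ·E ⊆ Â(E)`; (4) `Ker b` and `Coker b` are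
finite-dimensional `ℂ`-vector spaces.  Moreover, in that case
`Â(E) = B(E)` and this space is finite-dimensional over `ℂ`. -/
theorem stmt_3 (a : E →ₗ[ℂ] E) (ha : IsABMod a) :
    (IsSmall a ↔
      ((∃ N : ℕ, ∀ x ∈ Ahat a, (a ^ N) x = 0) ∧
       Btor E ⊆ Ahat a ∧
       (⋂ m : ℕ, {x : E | ∃ y : E, x = ((X : Rb) ^ m) • y}) ⊆ Ahat a ∧
       FiniteDimensional ℂ ↥(LinearMap.ker (bop : E →ₗ[ℂ] E)) ∧
       FiniteDimensional ℂ (E ⧸ LinearMap.range (bop : E →ₗ[ℂ] E)))) ∧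
    (IsSmall a →
      Ahat a = Btor E ∧ FiniteDimensional ℂ ↥(Submodule.span ℂ (Btor E))) := by

  constructor
  · constructor
    · rintro ⟨hfin, hBA, N, hN⟩
      haveI := hfin
      refine ⟨⟨N, hN⟩, hBA, ?_, ?_, ?_⟩
      · intro x hx
        have hx' : ∀ m, ∃ y, x = ((X:Rb)^m) • y := fun m => Set.mem_iInter.mp hx m
        rw [krull_sep x hx']
        intro S
        exact ⟨0, by simp⟩
      · obtain ⟨F, hF, hFmem⟩ := key_tor (E := E) 1
        haveI := hF
        refine Submodule.finiteDimensional_of_le (S₂ := F) ?_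
        intro x hx
        refine hFmem x ?_
        rw [pow_one, ← bop_apply]
        exact LinearMap.mem_ker.mp hx
      · exact coker_findim
    · rintro ⟨⟨N, hN⟩, hBA, hInt, hker, hcoker⟩
      refine ⟨?_, hBA, ⟨N, hN⟩⟩
      apply finite_of_sep hcoker
      intro z hz
      have hzA : z ∈ Ahat a := hInt (Set.mem_iInter.mpr fun m => hz m)
      have h1 : ((X:Rb)^(3*N)) • z = 0 := ahat_kill ha hN hzA
      obtain ⟨y, hy⟩ := hz (3*N + 3*N)
      have hyB : y ∈ Btor E := by
        refine ⟨3*N + (3*N + 3*N), ?_⟩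
        rw [pow_add, ← smul_smul, ← hy, h1]
      have h2 : ((X:Rb)^(3*N)) • y = 0 := ahat_kill ha hN (hBA hyB)
      rw [hy, show 3*N + 3*N = 3*N + 3*N from rfl, pow_add, ← smul_smul, h2, smul_zero]
  · rintro ⟨hfin, hBA, N, hN⟩
    haveI := hfin
    constructor
    · refine Set.Subset.antisymm (fun x hx => ⟨3*N, ahat_kill ha hN hx⟩) hBA
    · obtain ⟨F, hF, hFmem⟩ := key_tor (E := E) (3*N)
      haveI := hF
      refine Submodule.finiteDimensional_of_le (S₂ := F) ?_
      rw [Submodule.span_le]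
      intro x hx
      exact hFmem x (ahat_kill ha hN (hBA hx))

end
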